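/- Let k₀ > 1 be an integer, a > 0, M₀ > 0 and M a real with M > 4·M₀ and (4k₀)⁴·e^{−aM/2} ≤ 1/100. Let g be a Borel probability measure on ℝ whose tail ḡ(x) = g((x,∞)) satisfies ḡ(x + M') ≤ e^{−aM'}·ḡ(x) for all M' > M₀ and x ≥ 0. Let u : ℝ → [0,1] be nonincreasing, x₁ ∈ ℝ, x₂ = x₁ − M, and let r > M be such that u(x₂ − y) ≤ (4k₀)²·u(x₁ − y) for all y ∈ [M/2, r]. Then ∫_{(M, r]} e^{a·y/8}·u(x₁ − y) dg(y) ≤ ∫_{(−∞, M]} u(x₁ − y) dg(y). -/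

import Mathlib

open MeasureTheory Set

set_option maxHeartbeats 2000000 in
theorem stmt_19
    (k₀ : ℕ) (hk₀ : 1 < k₀)
    (a M₀ M : ℝ) (ha : 0 < a) (hM₀ : 0 < M₀)
    (hM : 4 * M₀ < M)
    (hM' : (4 * (k₀ : ℝ)) ^ 4 * Real.exp (-a * M / 2) ≤ 1 / 100)
    (g : Measure ℝ) (hg : IsProbabilityMeasure g)
    (hgdecay : ∀ M' x : ℝ, M₀ < M' → 0 ≤ x →
      (g (Ioi (x + M'))).toReal ≤ Real.exp (-a * M') * (g (Ioi x)).toReal)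
    (u : ℝ → ℝ) (hu01 : ∀ x, u x ∈ Icc (0 : ℝ) 1) (huanti : Antitone u)
    (x₁ x₂ : ℝ) (hx₂ : x₂ = x₁ - M)
    (r : ℝ) (hr : M < r)
    (hflat : ∀ y : ℝ, y ∈ Icc (M / 2) r → u (x₂ - y) ≤ (4 * (k₀ : ℝ)) ^ 2 * u (x₁ - y)) :
    ∫ y in Ioc M r, Real.exp (a * y / 8) * u (x₁ - y) ∂g ≤
      ∫ y in Iic M, u (x₁ - y) ∂g := by
  have hMpos : (0:ℝ) < M := by linarith
  set C : ℝ := (4 * (k₀ : ℝ)) ^ 2 with hCdef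
  have hk2 : (2:ℝ) ≤ (k₀:ℝ) := by exact_mod_cast hk₀
  have hC64 : (64:ℝ) ≤ C := by rw [hCdef]; nlinarith
  have hC0 : (0:ℝ) ≤ C := by linarith
  have hCsq : C ^ 2 * Real.exp (-(a * M) / 2) ≤ 1 / 100 := by
    have h4 : ((4 * (k₀:ℝ)) ^ 2) ^ 2 = (4 * (k₀:ℝ)) ^ 4 := by ring
    have hneg : -(a * M) / 2 = -a * M / 2 := by ring
    rw [hCdef, h4, hneg]; exact hM'
  have hexpM : Real.exp (-(a * M) / 2) ≤ 1 / 100 := by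
    have h := Real.exp_pos (-(a * M) / 2)
    nlinarith
  have hEeq : Real.exp (-(a*M)/2) * (Real.exp (a*M/4)) ^ 2 = 1 := by
    rw [← Real.exp_nat_mul, ← Real.exp_add,
      show -(a*M)/2 + ((2:ℕ):ℝ)*(a*M/4) = 0 by push_cast; ring, Real.exp_zero]
  have hCle : C ≤ Real.exp (a*M/4) / 10 := by
    have hE : 0 < Real.exp (a*M/4) := Real.exp_pos _
    have h3 : (0:ℝ) < Real.exp (-(a*M)/2) := Real.exp_pos _
    have h2 : C ^ 2 ≤ (Real.exp (a*M/4) / 10) ^ 2 := by nlinarith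
    nlinarith
  set gs : ℝ := (g (Ioi (M/2))).toReal with hgs
  set us : ℝ := u (x₁ - M/2) with hus
  have hus0 : 0 ≤ us := (hu01 _).1
  have hgs0 : 0 ≤ gs := ENNReal.toReal_nonneg
  have hu_meas : Measurable u := huanti.measurable
  have hf_meas : Measurable (fun y : ℝ => Real.exp (a * y / 8) * u (x₁ - y)) := by
    apply Measurable.mul
    · exact Real.measurable_exp.comp ((measurable_id.const_mul a).div_const 8)
    · exact hu_meas.comp (measurable_const.sub measurable_id)
  have gmono : ∀ {s t : Set ℝ}, s ⊆ t → (g s).toReal ≤ (g t).toReal := by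
    intro s t hst
    exact ENNReal.toReal_mono (measure_ne_top g t) (measure_mono hst)
  -- tail decay iterated
  have gdecay : ∀ j : ℕ, (g (Ioi (M/2 + j*M))).toReal ≤ Real.exp (-(a*M)*j) * gs := by
    intro j
    induction j with
    | zero => simp [hgs]
    | succ n ih =>
      push_cast
      rw [show M/2 + ((n:ℝ)+1)*M = (M/2 + n*M) + M by ring]
      have h1 := hgdecay M (M/2 + n*M) (by linarith) (by positivity)
      refine h1.trans ?_
      have h2 : Real.exp (-a*M) * (g (Ioi (M/2 + n*M))).toReal
          ≤ Real.exp (-a*M) * (Real.exp (-(a*M)*n) * gs) :=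
        mul_le_mul_of_nonneg_left ih (Real.exp_nonneg _)
      refine h2.trans_eq ?_
      rw [← mul_assoc, ← Real.exp_add]
      have h3 : -a*M + -(a*M)*(n:ℝ) = -(a*M)*((n:ℝ)+1) := by ring
      rw [h3]
  have gdecayM : (g (Ioi M)).toReal ≤ Real.exp (-(a*M)/2) * gs := by
    have h1 := hgdecay (M/2) (M/2) (by linarith) (by linarith)
    have h2 : M/2 + M/2 = M := by ring
    have h3 : -a * (M/2) = -(a*M)/2 := by ring
    rw [h2, h3] at h1
    exact h1
  -- iterated flatness
  have key : ∀ j : ℕ, ∀ w : ℝ, M/2 ≤ w → w + j*M ≤ r →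
      u (x₁ - (w + j*M)) ≤ C^j * u (x₁ - w) := by
    intro j
    induction j with
    | zero => intro w _ _; simp
    | succ n ih =>
      intro w hw hwr
      have hn0 : (0:ℝ) ≤ (n:ℝ) := Nat.cast_nonneg n
      push_cast at hwr ⊢
      have hwr' : w + n*M ≤ r := by linarith
      have heq : x₁ - (w + ((n:ℝ)+1)*M) = x₂ - (w + n*M) := by
        rw [hx₂]; ring
      have hflat' := hflat (w + n*M)
        ⟨by linarith [mul_nonneg hn0 hMpos.le], hwr'⟩
      calc u (x₁ - (w + ((n:ℝ)+1)*M)) = u (x₂ - (w + n*M)) := by rw [heq]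
        _ ≤ C * u (x₁ - (w + n*M)) := hflat'
        _ ≤ C * (C^n * u (x₁ - w)) :=
            mul_le_mul_of_nonneg_left (ih w hw hwr') hC0
        _ = C^(n+1) * u (x₁ - w) := by ring
  -- base bound
  have ubase : ∀ w : ℝ, M/2 ≤ w → w ≤ 3*M/2 → u (x₁ - w) ≤ C * us := by
    intro w _ hw2
    have h1 : u (x₁ - w) ≤ u (x₂ - M/2) := by
      apply huanti
      rw [hx₂]; linarith
    exact h1.trans (hflat (M/2) ⟨le_rfl, by linarith⟩)
  -- pointwise bound on block j
  have upoint : ∀ j : ℕ, ∀ y : ℝ, M/2 + j*M < y → y ≤ M/2 + ((j:ℝ)+1)*M → y ≤ r →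
      u (x₁ - y) ≤ C^(j+1) * us := by
    intro j y hy1 hy2 hyr
    have hjM : (0:ℝ) ≤ (j:ℝ)*M := by positivity
    have hw1 : M/2 ≤ y - j*M := by linarith
    have hexpand : ((j:ℝ)+1)*M = (j:ℝ)*M + M := by ring
    have hw2 : y - j*M ≤ 3*M/2 := by rw [hexpand] at hy2; linarith
    have hwy : (y - j*M) + j*M = y := by ring
    have h1 : u (x₁ - y) ≤ C^j * u (x₁ - (y - j*M)) := by
      have := key j (y - j*M) hw1 (by rw [hwy]; exact hyr)
      rwa [hwy] at this
    refine h1.trans ?_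
    calc C^j * u (x₁ - (y - j*M)) ≤ C^j * (C * us) :=
          mul_le_mul_of_nonneg_left (ubase _ hw1 hw2) (by positivity)
      _ = C^(j+1) * us := by ring
  -- blocks
  set N : ℕ := Nat.ceil ((r - M/2)/M) with hN
  set A : ℕ → Set ℝ := fun j => Ioc (M/2 + j*M) (M/2 + ((j:ℝ)+1)*M) ∩ Ioc M r with hA
  have hAm : ∀ j, MeasurableSet (A j) := fun j => measurableSet_Ioc.inter measurableSet_Ioc
  have hAsub : ∀ j, A j ⊆ Ioc M r := fun j => inter_subset_right
  have cover : Ioc M r = ⋃ j ∈ Finset.range N, A j := by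
    apply Subset.antisymm
    · intro y hy
      have hyM : M < y := hy.1
      have hyr : y ≤ r := hy.2
      set t : ℝ := (y - M/2)/M with ht
      have htpos : 0 < t := by rw [ht]; apply div_pos <;> linarith
      have hyt : y = M/2 + t*M := by rw [ht]; field_simp; ring
      set n : ℕ := Nat.ceil t with hn
      have hn1 : 1 ≤ n := Nat.ceil_pos.mpr htpos
      have hle : t ≤ (n:ℝ) := Nat.le_ceil t
      have hlt : (n:ℝ) < t + 1 := Nat.ceil_lt_add_one htpos.le
      have hcast : ((n - 1 : ℕ) : ℝ) = (n:ℝ) - 1 := by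
        have := Nat.cast_sub hn1 (R := ℝ)
        simpa using this
      have hnN : n ≤ N := by
        rw [hn, hN]
        apply Nat.ceil_le_ceil
        exact (div_le_div_iff_of_pos_right hMpos).mpr (by linarith)
      simp only [mem_iUnion, Finset.mem_range, hA]
      have h5 : (n:ℝ)*M < (t+1)*M := mul_lt_mul_of_pos_right hlt hMpos
      have h6 : t*M ≤ (n:ℝ)*M := mul_le_mul_of_nonneg_right hle hMpos.le
      refine ⟨n - 1, by omega, ⟨⟨?_, ?_⟩, hy⟩⟩
      · rw [hcast, hyt]; nlinarith [h5]
      · rw [hcast, hyt]; nlinarith [h6]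
    · intro y hy
      simp only [mem_iUnion] at hy
      obtain ⟨j, _, hj⟩ := hy
      exact hj.2
  -- integrability
  have hintf : IntegrableOn (fun y : ℝ => Real.exp (a * y / 8) * u (x₁ - y)) (Ioc M r) g := by
    apply Integrable.mono' (integrable_const (Real.exp (a*r/8)))
    · exact hf_meas.aestronglyMeasurable.restrict
    · filter_upwards [ae_restrict_mem measurableSet_Ioc] with y hy
      rw [Real.norm_eq_abs, abs_of_nonneg (mul_nonneg (Real.exp_nonneg _) (hu01 _).1)]
      have h1 : Real.exp (a*y/8) ≤ Real.exp (a*r/8) := by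
        apply Real.exp_le_exp.mpr
        have := mul_le_mul_of_nonneg_left hy.2 ha.le
        linarith
      exact le_trans (mul_le_of_le_one_right (Real.exp_nonneg _) (hu01 _).2) h1
  have hintu : Integrable (fun y : ℝ => u (x₁ - y)) g := by
    apply Integrable.mono' (integrable_const (1:ℝ))
    · exact (hu_meas.comp (measurable_const.sub measurable_id)).aestronglyMeasurable
    · filter_upwards with y
      rw [Real.norm_eq_abs, abs_of_nonneg (hu01 _).1]
      exact (hu01 _).2
  -- measure of block j
  have hmb : ∀ j : ℕ, (g (A j)).toReal ≤ Real.exp (-(a*M)*((j:ℝ)+1)/2) * gs := by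
    intro j
    rcases Nat.eq_zero_or_pos j with hj0 | hjpos
    · subst hj0
      refine ((gmono ((hAsub 0).trans Ioc_subset_Ioi_self)).trans gdecayM).trans ?_
      apply mul_le_mul_of_nonneg_right ?_ hgs0
      apply Real.exp_le_exp.mpr
      norm_num
    · have h1 : A j ⊆ Ioi (M/2 + j*M) := fun y hy => hy.1.1
      refine ((gmono h1).trans (gdecay j)).trans ?_
      apply mul_le_mul_of_nonneg_right ?_ hgs0
      apply Real.exp_le_exp.mpr
      have hj1 : (1:ℝ) ≤ (j:ℝ) := by exact_mod_cast hjpos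
      have h7 : 0 ≤ a*M*((j:ℝ)-1) :=
        mul_nonneg (mul_pos ha hMpos).le (by linarith)
      have h8 := mul_pos ha hMpos
      linarith
  -- the numeric bound
  have hCpow : ∀ j : ℕ, C^(j+1) ≤ Real.exp (((j:ℝ)+1) * (a*M/4)) * (1/10)^(j+1) := by
    intro j
    calc C^(j+1) ≤ (Real.exp (a*M/4) / 10)^(j+1) := pow_le_pow_left₀ hC0 hCle _
      _ = (Real.exp (a*M/4))^(j+1) * (1/10)^(j+1) := by rw [div_pow, one_div_pow, div_eq_mul_one_div]
      _ = Real.exp (((j:ℝ)+1) * (a*M/4)) * (1/10)^(j+1) := by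
          rw [← Real.exp_nat_mul]; push_cast; ring_nf
  have hkeynum : ∀ j : ℕ, Real.exp (a*(M/2+((j:ℝ)+1)*M)/8) * C^(j+1)
      * Real.exp (-(a*M)*((j:ℝ)+1)/2) ≤ (1/10)^(j+1) := by
    intro j
    have hj0 : (0:ℝ) ≤ (j:ℝ) := Nat.cast_nonneg j
    calc Real.exp (a*(M/2+((j:ℝ)+1)*M)/8) * C^(j+1) * Real.exp (-(a*M)*((j:ℝ)+1)/2)
        ≤ Real.exp (a*(M/2+((j:ℝ)+1)*M)/8) * (Real.exp (((j:ℝ)+1) * (a*M/4)) * (1/10)^(j+1))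
          * Real.exp (-(a*M)*((j:ℝ)+1)/2) :=
          mul_le_mul_of_nonneg_right
            (mul_le_mul_of_nonneg_left (hCpow j) (Real.exp_nonneg _)) (Real.exp_nonneg _)
      _ = (Real.exp (a*(M/2+((j:ℝ)+1)*M)/8) * Real.exp (((j:ℝ)+1) * (a*M/4))
          * Real.exp (-(a*M)*((j:ℝ)+1)/2)) * (1/10)^(j+1) := by ring
      _ = Real.exp (a*(M/2+((j:ℝ)+1)*M)/8 + ((j:ℝ)+1) * (a*M/4) + -(a*M)*((j:ℝ)+1)/2)
          * (1/10)^(j+1) := by rw [← Real.exp_add, ← Real.exp_add]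
      _ ≤ 1 * (1/10)^(j+1) := by
          apply mul_le_mul_of_nonneg_right ?_ (by positivity)
          apply Real.exp_le_one_iff.mpr
          have h7 : 0 ≤ a*M*(j:ℝ) := mul_nonneg (mul_pos ha hMpos).le hj0
          have h8 := mul_pos ha hMpos
          linarith
      _ = (1/10)^(j+1) := one_mul _
  -- block integral bound
  have term : ∀ j : ℕ, ∫ y in A j, Real.exp (a*y/8) * u (x₁ - y) ∂g
      ≤ (1/10)^(j+1) * (us * gs) := by
    intro j
    have hint := hintf.mono_set (hAsub j)
    have hDpt : ∀ y ∈ A j, Real.exp (a*y/8) * u (x₁ - y)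
        ≤ Real.exp (a*(M/2+((j:ℝ)+1)*M)/8) * (C^(j+1) * us) := by
      intro y hy
      obtain ⟨⟨hy1, hy2⟩, hy3, hy4⟩ := hy
      have h1 := upoint j y hy1 hy2 hy4
      have h2 : Real.exp (a*y/8) ≤ Real.exp (a*(M/2+((j:ℝ)+1)*M)/8) := by
        apply Real.exp_le_exp.mpr
        have := mul_le_mul_of_nonneg_left hy2 ha.le
        linarith
      exact mul_le_mul h2 h1 (hu01 _).1 (Real.exp_nonneg _)
    have hstep : ∫ y in A j, Real.exp (a*y/8) * u (x₁ - y) ∂g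
        ≤ Real.exp (a*(M/2+((j:ℝ)+1)*M)/8) * (C^(j+1) * us) * (g (A j)).toReal := by
      calc ∫ y in A j, Real.exp (a*y/8) * u (x₁ - y) ∂g
          ≤ ∫ _ in A j, Real.exp (a*(M/2+((j:ℝ)+1)*M)/8) * (C^(j+1) * us) ∂g :=
            setIntegral_mono_on hint
              (integrableOn_const (measure_ne_top g _)) (hAm j) hDpt
        _ = (g (A j)).toReal * (Real.exp (a*(M/2+((j:ℝ)+1)*M)/8) * (C^(j+1) * us)) := by
            rw [setIntegral_const, smul_eq_mul, measureReal_def]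
        _ = _ := by ring
    refine hstep.trans ?_
    calc Real.exp (a*(M/2+((j:ℝ)+1)*M)/8) * (C^(j+1) * us) * (g (A j)).toReal
        ≤ Real.exp (a*(M/2+((j:ℝ)+1)*M)/8) * (C^(j+1) * us)
          * (Real.exp (-(a*M)*((j:ℝ)+1)/2) * gs) :=
          mul_le_mul_of_nonneg_left (hmb j) (by positivity)
      _ = (Real.exp (a*(M/2+((j:ℝ)+1)*M)/8) * C^(j+1) * Real.exp (-(a*M)*((j:ℝ)+1)/2))
          * (us * gs) := by ring
      _ ≤ (1/10)^(j+1) * (us * gs) :=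
          mul_le_mul_of_nonneg_right (hkeynum j) (mul_nonneg hus0 hgs0)
  -- disjointness
  have hdisj : ∀ i j : ℕ, i < j → Disjoint (A i) (A j) := by
    intro i j hij
    apply Disjoint.mono inter_subset_left inter_subset_left
    rw [Set.Ioc_disjoint_Ioc]
    have hij' : ((i:ℝ)+1) ≤ (j:ℝ) := by exact_mod_cast hij
    refine le_trans (min_le_left _ _) (le_trans ?_ (le_max_right _ _))
    have h9 : ((i:ℝ)+1)*M ≤ (j:ℝ)*M := mul_le_mul_of_nonneg_right hij' hMpos.le
    linarith
  have hdisjP : Set.Pairwise ↑(Finset.range N) (Function.onFun Disjoint A) := by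
    intro i _ j _ hij
    rcases lt_or_gt_of_ne hij with h | h
    · exact hdisj i j h
    · exact (hdisj j i h).symm
  -- geometric sum
  have geo : (∑ j ∈ Finset.range N, ((1:ℝ)/10)^(j+1)) ≤ 1/9 := by
    have h1 : ∑ j ∈ Finset.range N, ((1:ℝ)/10)^(j+1)
        = (∑ j ∈ Finset.range N, ((1:ℝ)/10)^j) * (1/10) := by
      rw [Finset.sum_mul]
      exact Finset.sum_congr rfl fun j _ => pow_succ _ _
    rw [h1, geom_sum_eq (by norm_num : ((1:ℝ)/10) ≠ 1) N]
    have h2 : (0:ℝ) ≤ (1/10:ℝ)^N := by positivity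
    have h3 : (((1:ℝ)/10)^N - 1)/((1:ℝ)/10 - 1) = (1 - ((1:ℝ)/10)^N) * (10/9) := by
      ring
    rw [h3]
    linarith
  -- left side bound
  have hLHS : ∫ y in Ioc M r, Real.exp (a*y/8) * u (x₁ - y) ∂g ≤ (1/9) * (us * gs) := by
    calc ∫ y in Ioc M r, Real.exp (a*y/8) * u (x₁ - y) ∂g
        = ∑ j ∈ Finset.range N, ∫ y in A j, Real.exp (a*y/8) * u (x₁ - y) ∂g := by
          rw [cover]
          exact integral_biUnion_finset _ (fun j _ => hAm j) hdisjP
            (fun j _ => hintf.mono_set (hAsub j))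
      _ ≤ ∑ j ∈ Finset.range N, (1/10)^(j+1) * (us * gs) :=
          Finset.sum_le_sum fun j _ => term j
      _ = (∑ j ∈ Finset.range N, ((1:ℝ)/10)^(j+1)) * (us * gs) := by
          rw [Finset.sum_mul]
      _ ≤ (1/9) * (us * gs) :=
          mul_le_mul_of_nonneg_right geo (mul_nonneg hus0 hgs0)
  -- right side bound
  have hgM : (g (Ioi M)).toReal ≤ (1/100) * gs :=
    gdecayM.trans (mul_le_mul_of_nonneg_right hexpM hgs0)
  have hioc : (g (Ioc (M/2) M)).toReal = gs - (g (Ioi M)).toReal := by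
    have hun : Ioc (M/2) M ∪ Ioi M = Ioi (M/2) := Ioc_union_Ioi_eq_Ioi (by linarith)
    have hd : Disjoint (Ioc (M/2) M) (Ioi M) := Ioc_disjoint_Ioi le_rfl
    have hm := measure_union (μ := g) hd measurableSet_Ioi
    rw [hun] at hm
    have h2 : (g (Ioi (M/2))).toReal = (g (Ioc (M/2) M)).toReal + (g (Ioi M)).toReal := by
      rw [hm, ENNReal.toReal_add (measure_ne_top g _) (measure_ne_top g _)]
    rw [hgs, h2]; ring
  have hmid : us * (g (Ioc (M/2) M)).toReal ≤ ∫ y in Ioc (M/2) M, u (x₁ - y) ∂g := by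
    calc us * (g (Ioc (M/2) M)).toReal = ∫ _ in Ioc (M/2) M, us ∂g := by
          rw [setIntegral_const, smul_eq_mul, mul_comm, measureReal_def]
      _ ≤ ∫ y in Ioc (M/2) M, u (x₁ - y) ∂g := by
          apply setIntegral_mono_on
            (integrableOn_const (measure_ne_top g _))
            hintu.integrableOn measurableSet_Ioc
          intro y hy
          rw [hus]
          exact huanti (by linarith [hy.1])
  have hfin : ∫ y in Ioc (M/2) M, u (x₁ - y) ∂g ≤ ∫ y in Iic M, u (x₁ - y) ∂g := by
    apply setIntegral_mono_set hintu.integrableOn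
    · exact ae_of_all _ fun y => (hu01 (x₁ - y)).1
    · exact HasSubset.Subset.eventuallyLE Ioc_subset_Iic_self
  -- assemble
  refine hLHS.trans (le_trans ?_ (hmid.trans hfin))
  rw [hioc]
  have h10 := mul_le_mul_of_nonneg_left hgM hus0
  have h11 := mul_nonneg hus0 hgs0
  nlinarith [h10, h11]
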